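/- Base case of the splitting lemma: if n is a multiple of 2^x and X = {π_1,...,π_x} is a set of x permutations of [n], then there exist disjoint sets A_1, A_2 ⊆ [n], each of size n/2^x, such that for every π_i ∈ X, either all elements of A_1 precede all elements of A_2 in π_i or vice versa. -/

import Mathlib

/-- `A ⇒ B` in `π`: every element of `A` appears before every element of `B`
in the permutation `π`. -/
def Before {n : ℕ} (π : Equiv.Perm (Fin n)) (A B : Finset (Fin n)) : Prop :=
  ∀ a ∈ A, ∀ b ∈ B, π a < π b

lemma exists_lower_half {n : ℕ} (π : Equiv.Perm (Fin n)) (S : Finset (Fin n)) (k : ℕ)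
    (hk : k ≤ S.card) :
    ∃ T ⊆ S, T.card = k ∧ ∀ a ∈ T, ∀ b ∈ S \ T, π a < π b := by
  induction k with
  | zero => exact ⟨∅, by simp⟩
  | succ k ih =>
    obtain ⟨T, hTS, hcard, hlt⟩ := ih (Nat.le_of_succ_le hk)
    have hne : (S \ T).Nonempty := by
      rw [← Finset.card_pos, Finset.card_sdiff_of_subset hTS]; omega
    obtain ⟨b₀, hb₀, hmin⟩ := Finset.exists_min_image (S \ T) (fun a => π a) hne
    have hb₀' := Finset.mem_sdiff.mp hb₀
    refine ⟨insert b₀ T, Finset.insert_subset hb₀'.1 hTS, ?_, ?_⟩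
    · rw [Finset.card_insert_of_notMem hb₀'.2, hcard]
    · intro a ha b hb
      rw [Finset.mem_sdiff] at hb
      have hbT : b ∈ S \ T :=
        Finset.mem_sdiff.mpr ⟨hb.1, fun h => hb.2 (Finset.mem_insert_of_mem h)⟩
      rcases Finset.mem_insert.mp ha with rfl | haT
      · exact lt_of_le_of_ne (hmin b hbT)
          (fun h => hb.2 (by rw [π.injective h]; exact Finset.mem_insert_self _ _))
      · exact hlt a haT b hbT

lemma Before.mono {n : ℕ} {π : Equiv.Perm (Fin n)} {A B A' B' : Finset (Fin n)}
    (h : Before π A B) (hA : A' ⊆ A) (hB : B' ⊆ B) : Before π A' B' :=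
  fun a ha b hb => h a (hA ha) b (hB hb)

theorem stmt15 (x n : ℕ) (hx : 1 ≤ x) (hn : 2 ^ x ∣ n)
    (X : Fin x → Equiv.Perm (Fin n)) :
    ∃ A₁ A₂ : Finset (Fin n),
      Disjoint A₁ A₂ ∧ A₁.card = n / 2 ^ x ∧ A₂.card = n / 2 ^ x ∧
      ∀ i : Fin x, Before (X i) A₁ A₂ ∨ Before (X i) A₂ A₁ := by
  induction x, hx using Nat.le_induction with
  | base =>
    have h2 : (2 : ℕ) ∣ n := by simpa using hn
    have hcard : (Finset.univ : Finset (Fin n)).card = n := by simp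
    obtain ⟨T, hTS, hTcard, hlt⟩ := exists_lower_half (X 0) Finset.univ (n / 2)
      (by rw [hcard]; exact Nat.div_le_self _ _)
    refine ⟨T, Finset.univ \ T, Finset.disjoint_sdiff, by simpa using hTcard, ?_, ?_⟩
    · rw [Finset.card_sdiff_of_subset hTS, hcard, hTcard]
      omega
    · intro i
      have : i = 0 := Fin.ext (by omega)
      subst this
      exact Or.inl hlt
  | succ x hx1 ih =>
    have h2x : 2 ^ x ∣ n := dvd_trans (pow_dvd_pow 2 (Nat.le_succ x)) hn
    obtain ⟨A₁, A₂, hdisj, hc₁, hc₂, hbef⟩ := ih h2x (fun j => X j.castSucc)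
    set π := X (Fin.last x) with hπ
    set m := n / 2 ^ x with hm
    have hmeven : 2 ∣ m := by
      obtain ⟨k, rfl⟩ := hn
      have he : 2 ^ (x + 1) * k = 2 ^ x * (2 * k) := by ring
      rw [hm, he, Nat.mul_div_cancel_left _ (by positivity)]
      exact ⟨k, rfl⟩
    have hhalf : n / 2 ^ (x + 1) = m / 2 := by
      rw [hm, pow_succ, Nat.div_div_eq_div_mul]
    obtain ⟨T₁, hT₁sub, hT₁card, hT₁lt⟩ := exists_lower_half π A₁ (m / 2)
      (by rw [hc₁]; exact Nat.div_le_self _ _)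
    obtain ⟨T₂, hT₂sub, hT₂card, hT₂lt⟩ := exists_lower_half π A₂ (m / 2)
      (by rw [hc₂]; exact Nat.div_le_self _ _)
    have hU₁card : (A₁ \ T₁).card = m / 2 := by
      rw [Finset.card_sdiff_of_subset hT₁sub, hc₁, hT₁card]; omega
    have hU₂card : (A₂ \ T₂).card = m / 2 := by
      rw [Finset.card_sdiff_of_subset hT₂sub, hc₂, hT₂card]; omega
    by_cases hcase : ∀ a ∈ T₁, ∀ b ∈ A₂ \ T₂, π a < π b
    · refine ⟨T₁, A₂ \ T₂, ?_, by rw [hT₁card, hhalf], by rw [hU₂card, hhalf], ?_⟩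
      · exact Finset.disjoint_of_subset_left hT₁sub
          (Finset.disjoint_of_subset_right (Finset.sdiff_subset) hdisj)
      · intro i
        refine Fin.lastCases ?_ ?_ i
        · exact Or.inl hcase
        · intro j
          rcases hbef j with h | h
          · exact Or.inl (h.mono hT₁sub Finset.sdiff_subset)
          · exact Or.inr (h.mono Finset.sdiff_subset hT₁sub)
    · push_neg at hcase
      obtain ⟨a, haT₁, b, hb, hba⟩ := hcase
      have hba' : π b < π a := by
        refine lt_of_le_of_ne hba (π.injective.ne ?_)
        intro h; subst h
        exact (Finset.disjoint_left.mp hdisj (hT₁sub haT₁)) ((Finset.sdiff_subset) hb)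
      refine ⟨T₂, A₁ \ T₁, ?_, by rw [hT₂card, hhalf], by rw [hU₁card, hhalf], ?_⟩
      · exact Finset.disjoint_of_subset_left hT₂sub
          (Finset.disjoint_of_subset_right Finset.sdiff_subset hdisj.symm)
      · intro i
        refine Fin.lastCases ?_ ?_ i
        · refine Or.inl (fun a' ha' b' hb' => ?_)
          calc π a' < π b := hT₂lt a' ha' b hb
            _ < π a := hba'
            _ < π b' := hT₁lt a haT₁ b' hb'
        · intro j
          rcases hbef j with h | h
          · exact Or.inr (h.mono Finset.sdiff_subset hT₂sub)
          · exact Or.inl (h.mono hT₂sub Finset.sdiff_subset)
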